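/- arXiv:2005.10881 — 8 statements merged into one kernel-verified Lean document; each statement's English description precedes it below -/
import Mathlib

section
/- Let ε ≥ 0 and δ ∈ [0,1], and let P and Q be probability measures on a measurable space satisfying (ε,δ)-indistinguishability. Then for every measurable set E (viewed as the rejection region of a hypothesis test with type I error α = P(E) and type II error β = 1 − Q(E)), one has 1 − Q(E) ≥ f_{ε,δ}(P(E)), i.e. β ≥ max{0, 1 − δ − e^ε·α, e^{−ε}·(1 − δ − α)}, where probabilities are taken as real numbers. -/
open MeasureTheory Real

/-- The trade-off function `f_{ε,δ}` for `(ε,δ)`-differential privacy. -/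
noncomputable def fDP (ε δ α : ℝ) : ℝ :=
  max 0 (max (1 - δ - Real.exp ε * α) (Real.exp (-ε) * (1 - δ - α)))

theorem stmt_0 {Ω : Type*} [MeasurableSpace Ω] (ε δ : ℝ) (hε : 0 ≤ ε)
    (hδ : δ ∈ Set.Icc (0 : ℝ) 1)
    (P Q : Measure Ω) [IsProbabilityMeasure P] [IsProbabilityMeasure Q]
    (hindist : ∀ O : Set Ω, MeasurableSet O →
      (P O).toReal ≤ Real.exp ε * (Q O).toReal + δ ∧
      (Q O).toReal ≤ Real.exp ε * (P O).toReal + δ) :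
    ∀ E : Set Ω, MeasurableSet E →
      1 - (Q E).toReal ≥ fDP ε δ ((P E).toReal) := by
  intro E hE
  set a := (P E).toReal with ha
  set b := (Q E).toReal with hb
  have hb1 : b ≤ 1 := by
    have := prob_le_one (μ := Q) (s := E)
    simpa [hb] using ENNReal.toReal_mono (by simp) this
  have hPc : (P Eᶜ).toReal = 1 - a := by
    rw [prob_compl_eq_one_sub hE]
    rw [ENNReal.toReal_sub_of_le (prob_le_one) (by simp)]
    simp [ha]
  have hQc : (Q Eᶜ).toReal = 1 - b := by
    rw [prob_compl_eq_one_sub hE]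
    rw [ENNReal.toReal_sub_of_le (prob_le_one) (by simp)]
    simp [hb]
  have h1 := (hindist E hE).2
  have h2 := (hindist Eᶜ hE.compl).1
  rw [hPc, hQc] at h2
  have hx : Real.exp (-ε) * Real.exp ε = 1 := by
    rw [← Real.exp_add]; simp
  unfold fDP
  rw [ge_iff_le, max_le_iff, max_le_iff]
  refine ⟨by linarith, by linarith, ?_⟩
  nlinarith [Real.exp_pos (-ε), Real.exp_pos ε]
end

section
/- Let ε ≥ 0 and δ ∈ [0,1], and let P and Q be probability measures on a measurable space satisfying (ε,δ)-indistinguishability, where P is the distribution of the adversary's observation for members and Q for non-members. Then for every measurable set E (the region on which the adversary predicts 'member'), with true positive rate TPR = P(E) and false positive rate α = Q(E), the membership advantage satisfies TPR − α ≤ 1 − f_{ε,δ}(α) − α. -/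
open MeasureTheory Real

theorem stmt_1 {Ω : Type*} [MeasurableSpace Ω] (ε δ : ℝ) (hε : 0 ≤ ε)
    (hδ : δ ∈ Set.Icc (0 : ℝ) 1)
    (P Q : Measure Ω) [IsProbabilityMeasure P] [IsProbabilityMeasure Q]
    (hindist : ∀ O : Set Ω, MeasurableSet O →
      (P O).toReal ≤ Real.exp ε * (Q O).toReal + δ ∧
      (Q O).toReal ≤ Real.exp ε * (P O).toReal + δ) :
    ∀ E : Set Ω, MeasurableSet E →
      (P E).toReal - (Q E).toReal ≤ 1 - fDP ε δ ((Q E).toReal) - (Q E).toReal := by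
  intro E hE
  have hPc : (P Eᶜ).toReal = 1 - (P E).toReal := by
    rw [prob_compl_eq_one_sub hE, ENNReal.toReal_sub_of_le prob_le_one ENNReal.one_ne_top,
      ENNReal.toReal_one]
  have hQc : (Q Eᶜ).toReal = 1 - (Q E).toReal := by
    rw [prob_compl_eq_one_sub hE, ENNReal.toReal_sub_of_le prob_le_one ENNReal.one_ne_top,
      ENNReal.toReal_one]
  have h1 := (hindist E hE).1
  have h2 := (hindist Eᶜ hE.compl).2
  rw [hPc, hQc] at h2
  have hP1 : (P E).toReal ≤ 1 := by
    have := prob_le_one (μ := P) (s := E)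
    simpa using ENNReal.toReal_mono ENNReal.one_ne_top this
  have hexp : Real.exp (-ε) * Real.exp ε = 1 := by
    rw [← Real.exp_add]; simp
  have hepos : (0 : ℝ) < Real.exp (-ε) := Real.exp_pos _
  -- third bound: e^{-ε}(1-δ-α) ≤ 1 - P(E)
  have h3 : Real.exp (-ε) * (1 - δ - (Q E).toReal) ≤ 1 - (P E).toReal := by
    have := mul_le_mul_of_nonneg_left h2 hepos.le
    calc Real.exp (-ε) * (1 - δ - (Q E).toReal)
        = Real.exp (-ε) * (1 - (Q E).toReal) - Real.exp (-ε) * δ := by ring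
      _ ≤ Real.exp (-ε) * (Real.exp ε * (1 - (P E).toReal) + δ) - Real.exp (-ε) * δ := by
          linarith
      _ = (Real.exp (-ε) * Real.exp ε) * (1 - (P E).toReal) := by ring
      _ = 1 - (P E).toReal := by rw [hexp]; ring
  have key : fDP ε δ ((Q E).toReal) ≤ 1 - (P E).toReal := by
    unfold fDP
    exact max_le (by linarith) (max_le (by linarith) h3)
  linarith
end

section
/- Let ε ≥ 0, δ ∈ [0,1], γ > 0, and let P and Q be probability measures on a measurable space satisfying (ε,δ)-indistinguishability, where P is the distribution of the adversary's observation for members and Q for non-members. Then for every measurable set E (the region on which the adversary predicts 'member') with P(E) + γ·Q(E) > 0, setting α = Q(E), the positive predictive value satisfies P(E) / (P(E) + γ·Q(E)) ≤ (1 − f_{ε,δ}(α)) / (1 − f_{ε,δ}(α) + γ·α). -/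
open MeasureTheory Real

theorem stmt_2 {Ω : Type*} [MeasurableSpace Ω] (ε δ γ : ℝ) (hε : 0 ≤ ε)
    (hδ : δ ∈ Set.Icc (0 : ℝ) 1) (hγ : 0 < γ)
    (P Q : Measure Ω) [IsProbabilityMeasure P] [IsProbabilityMeasure Q]
    (hindist : ∀ O : Set Ω, MeasurableSet O →
      (P O).toReal ≤ Real.exp ε * (Q O).toReal + δ ∧
      (Q O).toReal ≤ Real.exp ε * (P O).toReal + δ) :
    ∀ E : Set Ω, MeasurableSet E → 0 < (P E).toReal + γ * (Q E).toReal →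
      (P E).toReal / ((P E).toReal + γ * (Q E).toReal) ≤
        (1 - fDP ε δ ((Q E).toReal)) /
          (1 - fDP ε δ ((Q E).toReal) + γ * (Q E).toReal) := by
  intro E hE hpos
  set a := (P E).toReal with ha
  set α := (Q E).toReal with hα
  have ha0 : 0 ≤ a := ENNReal.toReal_nonneg
  have hα0 : 0 ≤ α := ENNReal.toReal_nonneg
  have ha1 : a ≤ 1 := by
    rw [ha]
    exact ENNReal.toReal_le_of_le_ofReal zero_le_one (by simpa using prob_le_one)
  have hPc : (P Eᶜ).toReal = 1 - a := by
    rw [measure_compl hE (measure_ne_top P E), measure_univ,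
      ENNReal.toReal_sub_of_le prob_le_one ENNReal.one_ne_top, ENNReal.toReal_one]
  have hQc : (Q Eᶜ).toReal = 1 - α := by
    rw [measure_compl hE (measure_ne_top Q E), measure_univ,
      ENNReal.toReal_sub_of_le prob_le_one ENNReal.one_ne_top, ENNReal.toReal_one]
  have h1 : a ≤ Real.exp ε * α + δ := (hindist E hE).1
  have h2 : 1 - α ≤ Real.exp ε * (1 - a) + δ := by
    have := (hindist Eᶜ hE.compl).2
    rwa [hPc, hQc] at this
  have hexp : 0 < Real.exp ε := Real.exp_pos ε
  -- a ≤ 1 - fDP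
  have hab : a ≤ 1 - fDP ε δ α := by
    have h3 : Real.exp (-ε) * (1 - δ - α) ≤ 1 - a := by
      rw [Real.exp_neg]
      rw [inv_mul_le_iff₀ hexp]
      nlinarith
    have h4 : 1 - δ - Real.exp ε * α ≤ 1 - a := by linarith
    have h5 : fDP ε δ α ≤ 1 - a := by
      unfold fDP
      rw [max_le_iff, max_le_iff]
      exact ⟨by linarith, h4, h3⟩
    linarith
  set b := 1 - fDP ε δ α with hb
  have hb0 : 0 ≤ b := le_trans ha0 hab
  have hbpos : 0 < b + γ * α := by nlinarith
  rw [div_le_div_iff₀ hpos hbpos]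
  nlinarith [mul_le_mul_of_nonneg_right hab (mul_nonneg hγ.le hα0)]
end

section
/- For every ε ≥ 0, the maximum over α ∈ [0,1] of the membership advantage bound 1 − f_{ε,0}(α) − α equals (e^ε − 1)/(e^ε + 1), and this maximum is attained at α = 1/(1 + e^ε); in particular, for every α ∈ [0,1] one has 1 − f_{ε,0}(α) − α ≤ e^ε − 1, so the bound of Theorem 4.2 is at least as tight as Yeom et al.'s bound e^ε − 1. -/
open Real

theorem stmt_4 (ε : ℝ) (hε : 0 ≤ ε) :
    (∀ α ∈ Set.Icc (0 : ℝ) 1,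
      1 - fDP ε 0 α - α ≤ (Real.exp ε - 1) / (Real.exp ε + 1)) ∧
    (1 / (1 + Real.exp ε) ∈ Set.Icc (0 : ℝ) 1 ∧
      1 - fDP ε 0 (1 / (1 + Real.exp ε)) - 1 / (1 + Real.exp ε) =
        (Real.exp ε - 1) / (Real.exp ε + 1)) ∧
    (∀ α ∈ Set.Icc (0 : ℝ) 1, 1 - fDP ε 0 α - α ≤ Real.exp ε - 1) := by
  have hE : (1:ℝ) ≤ Real.exp ε := Real.one_le_exp hε
  have hEpos : (0:ℝ) < Real.exp ε := Real.exp_pos ε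
  have h1E : (0:ℝ) < 1 + Real.exp ε := by linarith
  have hinv : Real.exp (-ε) * Real.exp ε = 1 := by
    rw [← Real.exp_add]; simp
  have hnegpos : (0:ℝ) < Real.exp (-ε) := Real.exp_pos _
  have key : ∀ α ∈ Set.Icc (0:ℝ) 1,
      1 - fDP ε 0 α - α ≤ (Real.exp ε - 1) / (Real.exp ε + 1) := by
    intro α hα
    obtain ⟨h0, h1⟩ := hα
    rw [le_div_iff₀ (by linarith : (0:ℝ) < Real.exp ε + 1)]
    rcases le_or_gt α (1/(1+Real.exp ε)) with h | h
    · have hf : 1 - 0 - Real.exp ε * α ≤ fDP ε 0 α :=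
        le_max_of_le_right (le_max_left _ _)
      have hαE : α * (1 + Real.exp ε) ≤ 1 := by
        rw [← le_div_iff₀ h1E]; exact h
      nlinarith
    · have hf : Real.exp (-ε) * (1 - 0 - α) ≤ fDP ε 0 α :=
        le_max_of_le_right (le_max_right _ _)
      have hαE : 1 ≤ α * (1 + Real.exp ε) := by
        rw [← div_le_iff₀ h1E]; exact h.le
      have hneg1 : Real.exp (-ε) ≤ 1 := Real.exp_le_one_iff.mpr (by linarith)
      have step : 1 - fDP ε 0 α - α ≤ (1 - α) * (1 - Real.exp (-ε)) := by nlinarith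
      have h2 : (1 - α) * (1 + Real.exp ε) ≤ Real.exp ε := by nlinarith
      nlinarith [mul_le_mul_of_nonneg_right step (by linarith : (0:ℝ) ≤ Real.exp ε + 1),
        mul_le_mul_of_nonneg_right h2 (by linarith : (0:ℝ) ≤ 1 - Real.exp (-ε)), hinv]
  refine ⟨key, ⟨⟨by positivity, ?_⟩, ?_⟩, ?_⟩
  · rw [div_le_one h1E]; linarith
  · have hval : fDP ε 0 (1 / (1 + Real.exp ε)) = 1 / (1 + Real.exp ε) := by
      unfold fDP
      have e1 : 1 - 0 - Real.exp ε * (1 / (1 + Real.exp ε)) = 1 / (1 + Real.exp ε) := by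
        field_simp
        ring
      have e2 : Real.exp (-ε) * (1 - 0 - 1 / (1 + Real.exp ε)) = 1 / (1 + Real.exp ε) := by
        field_simp
        nlinarith
      rw [e1, e2, max_self, max_eq_right (by positivity)]
    have hne2 : Real.exp ε + (1:ℝ) ≠ 0 := by intro hc; linarith
    rw [hval, eq_div_iff hne2, sub_mul, sub_mul, one_mul, add_comm 1 (Real.exp ε),
      div_mul_cancel₀ _ hne2]
    ring
  · intro α hα
    calc 1 - fDP ε 0 α - α ≤ (Real.exp ε - 1) / (Real.exp ε + 1) := key α hα
      _ ≤ Real.exp ε - 1 := by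
        rw [div_le_iff₀ (by linarith)]
        nlinarith
end

section
/- Let Δ > 0 and μ > 0, set σ = Δ/μ, and let a, b ∈ ℝ with |a − b| ≤ Δ. Let α ∈ (0,1) and t ∈ ℝ with Φ(t) = 1 − α. Then for every measurable set E ⊆ ℝ with N(a, σ²)(E) ≤ α, one has N(b, σ²)(ℝ \ E) ≥ Φ(t − μ). (Hence a mechanism releasing θ(S) + ζ with ζ ∼ N(0, Δ²/μ²), where Δ is the global sensitivity of θ, is μ-Gaussian differentially private.) -/
open MeasureTheory ProbabilityTheory Real Set

noncomputable def stdGaussCDF (x : ℝ) : ℝ :=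
  ProbabilityTheory.cdf (ProbabilityTheory.gaussianReal 0 1) x

lemma pdf_ratio (c x : ℝ) :
    gaussianPDFReal c 1 x = rexp (c * x - c ^ 2 / 2) * gaussianPDFReal 0 1 x := by
  simp only [gaussianPDFReal, NNReal.coe_one, mul_one, sub_zero]
  rw [mul_comm (rexp _), mul_assoc, ← Real.exp_add]
  congr 1
  ring_nf

lemma np_core (c t α : ℝ) (hc : 0 ≤ c) (hα : α ∈ Set.Ioo (0:ℝ) 1)
    (ht : stdGaussCDF t = 1 - α) (E : Set ℝ) (hE : MeasurableSet E)
    (hPE : (gaussianReal 0 1 E).toReal ≤ α) :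
    (gaussianReal c 1 Eᶜ).toReal ≥ stdGaussCDF (t - c) := by
  set P := gaussianReal 0 1 with hP
  set Q := gaussianReal c 1 with hQ
  have h1 : (1 : NNReal) ≠ 0 := one_ne_zero
  set F := Eᶜ with hF
  set L := Iic t with hL
  have hLmeas : MeasurableSet L := measurableSet_Iic
  have hFmeas : MeasurableSet F := hE.compl
  -- P L = ofReal (1 - α)
  have hPL : P L = ENNReal.ofReal (1 - α) := by
    rw [← ht, stdGaussCDF, ofReal_cdf]
  -- P F ≥ P L
  have hPEr : P E ≤ ENNReal.ofReal α := by
    rw [← ENNReal.ofReal_toReal (measure_ne_top P E)]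
    exact ENNReal.ofReal_le_ofReal hPE
  have hPF : P L ≤ P F := by
    rw [hPL, hF, prob_compl_eq_one_sub hE]
    refine le_trans ?_ (tsub_le_tsub_left hPEr 1)
    rw [ENNReal.ofReal_sub _ (le_of_lt hα.1), ENNReal.ofReal_one]
  -- key constant
  set k : ENNReal := ENNReal.ofReal (rexp (c * t - c ^ 2 / 2)) with hk
  -- claim 1
  have claim1 : k * P (F \ L) ≤ Q (F \ L) := by
    rw [hP, hQ, gaussianReal_apply _ h1, gaussianReal_apply _ h1,
      ← lintegral_const_mul k (measurable_gaussianPDF 0 1)]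
    refine setLIntegral_mono (measurable_gaussianPDF c 1) (fun x hx => ?_)
    have hxt : t ≤ x := le_of_not_ge hx.2
    have hreal : rexp (c * t - c ^ 2 / 2) * gaussianPDFReal 0 1 x ≤ gaussianPDFReal c 1 x := by
      rw [pdf_ratio c x]
      exact mul_le_mul_of_nonneg_right (Real.exp_le_exp.mpr (by nlinarith))
        (gaussianPDFReal_nonneg _ _ _)
    rw [hk, gaussianPDF, gaussianPDF, ← ENNReal.ofReal_mul (Real.exp_nonneg _)]
    exact ENNReal.ofReal_le_ofReal hreal
  -- claim 2
  have claim2 : Q (L \ F) ≤ k * P (L \ F) := by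
    rw [hP, hQ, gaussianReal_apply _ h1, gaussianReal_apply _ h1,
      ← lintegral_const_mul k (measurable_gaussianPDF 0 1)]
    refine setLIntegral_mono ((measurable_gaussianPDF 0 1).const_mul k) (fun x hx => ?_)
    have hxt : x ≤ t := hx.1
    have hreal : gaussianPDFReal c 1 x ≤ rexp (c * t - c ^ 2 / 2) * gaussianPDFReal 0 1 x := by
      rw [pdf_ratio c x]
      exact mul_le_mul_of_nonneg_right (Real.exp_le_exp.mpr (by nlinarith))
        (gaussianPDFReal_nonneg _ _ _)
    rw [hk, gaussianPDF, gaussianPDF, ← ENNReal.ofReal_mul (Real.exp_nonneg _)]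
    exact ENNReal.ofReal_le_ofReal hreal
  -- claim 3 : P (L \ F) ≤ P (F \ L)
  have claim3 : P (L \ F) ≤ P (F \ L) := by
    have h1' := measure_inter_add_diff (μ := P) L hFmeas
    have h2' := measure_inter_add_diff (μ := P) F hLmeas
    have hfin : P (L ∩ F) ≠ ⊤ := measure_ne_top _ _
    have : P (L ∩ F) + P (L \ F) ≤ P (L ∩ F) + P (F \ L) := by
      rw [h1']
      calc P L ≤ P F := hPF
        _ = P (F ∩ L) + P (F \ L) := h2'.symm
        _ = P (L ∩ F) + P (F \ L) := by rw [inter_comm]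
    exact (ENNReal.add_le_add_iff_left hfin).mp this
  -- Q L ≤ Q F
  have hQLF : Q L ≤ Q F := by
    have h1' := measure_inter_add_diff (μ := Q) L hFmeas
    have h2' := measure_inter_add_diff (μ := Q) F hLmeas
    calc Q L = Q (L ∩ F) + Q (L \ F) := h1'.symm
      _ ≤ Q (L ∩ F) + Q (F \ L) := by
          exact add_le_add_right (claim2.trans ((mul_le_mul_right claim3 k).trans claim1)) _
      _ = Q (F ∩ L) + Q (F \ L) := by rw [inter_comm]
      _ = Q F := h2'
  -- Q L = ofReal (stdGaussCDF (t - c))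
  have hQL : Q L = ENNReal.ofReal (stdGaussCDF (t - c)) := by
    have hmap : Q = P.map (· + c) := by
      rw [hP, hQ, gaussianReal_map_add_const, zero_add]
    rw [hmap, Measure.map_apply (measurable_add_const c) hLmeas]
    have : ((· + c) ⁻¹' L) = Iic (t - c) := by
      ext x; simp [hL, le_sub_iff_add_le]
    rw [this, stdGaussCDF, ofReal_cdf]
  rw [hQL] at hQLF
  have h0 : (0:ℝ) ≤ stdGaussCDF (t - c) := cdf_nonneg _ _
  rw [ge_iff_le, ← ENNReal.toReal_ofReal h0]
  exact ENNReal.toReal_mono (measure_ne_top _ _) hQLF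

lemma gauss_map_neg (m : ℝ) :
    (gaussianReal m 1).map (fun x : ℝ => -x) = gaussianReal (-m) 1 := by
  have h : (fun x : ℝ => -x) = (fun x : ℝ => (-1) * x) := by funext x; ring
  rw [h, gaussianReal_map_const_mul (-1)]
  have hv : (NNReal.mk (((-1):ℝ)^2) (sq_nonneg _)) * 1 = 1 := by
    rw [← NNReal.coe_inj]; norm_num
  rw [hv, neg_one_mul]

lemma np_wrap (c μ t α : ℝ) (hμ : 0 < μ) (hcμ : |c| ≤ μ) (hα : α ∈ Set.Ioo (0:ℝ) 1)
    (ht : stdGaussCDF t = 1 - α) (E : Set ℝ) (hE : MeasurableSet E)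
    (hPE : (gaussianReal 0 1 E).toReal ≤ α) :
    (gaussianReal c 1 Eᶜ).toReal ≥ stdGaussCDF (t - μ) := by
  have hmono : stdGaussCDF (t - μ) ≤ stdGaussCDF (t - |c|) :=
    monotone_cdf _ (by linarith)
  rcases le_or_gt 0 c with hc | hc
  · have := np_core c t α hc hα ht E hE hPE
    rw [abs_of_nonneg hc] at hmono
    linarith
  · set E' : Set ℝ := (fun x : ℝ => -x) ⁻¹' E with hE'def
    have hE' : MeasurableSet E' := measurable_neg hE
    have hP' : (gaussianReal 0 1 E').toReal ≤ α := by
      have h0 : (gaussianReal 0 1).map (fun x : ℝ => -x) = gaussianReal 0 1 := by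
        rw [gauss_map_neg, neg_zero]
      have : gaussianReal 0 1 E = gaussianReal 0 1 E' := by
        conv_lhs => rw [← h0]
        rw [Measure.map_apply measurable_neg hE]
      rwa [← this]
    have hcore := np_core (-c) t α (by linarith) hα ht E' hE' hP'
    have hQ' : gaussianReal (-c) 1 E'ᶜ = gaussianReal c 1 Eᶜ := by
      rw [← gauss_map_neg c, Measure.map_apply measurable_neg hE'.compl]
      congr 1
      ext x
      simp [hE'def]
    rw [hQ'] at hcore
    rw [abs_of_neg hc] at hmono
    rw [show t - -c = t - (-c) by ring] at hmono
    linarith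

theorem stmt_10 (Δ μ a b α t : ℝ) (hΔ : 0 < Δ) (hμ : 0 < μ)
    (hab : |a - b| ≤ Δ) (hα : α ∈ Set.Ioo (0 : ℝ) 1)
    (ht : stdGaussCDF t = 1 - α) :
    ∀ E : Set ℝ, MeasurableSet E →
      (gaussianReal a (Real.toNNReal ((Δ / μ) ^ 2)) E).toReal ≤ α →
      (gaussianReal b (Real.toNNReal ((Δ / μ) ^ 2)) Eᶜ).toReal ≥
        stdGaussCDF (t - μ) := by
  intro E hE hPE
  set σ : ℝ := Δ / μ with hσdef
  have hσ : 0 < σ := div_pos hΔ hμ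
  set v : NNReal := Real.toNNReal ((Δ / μ) ^ 2) with hvdef
  have hveq : (v : ℝ) = σ ^ 2 := Real.coe_toNNReal _ (sq_nonneg _)
  -- map lemma
  have hmap : ∀ m : ℝ, (gaussianReal m v).map (fun x => σ⁻¹ * x + (-(a/σ)))
      = gaussianReal ((m - a)/σ) 1 := by
    intro m
    have h1 : (fun x : ℝ => σ⁻¹ * x + (-(a/σ)))
        = (fun y : ℝ => y + (-(a/σ))) ∘ (fun x : ℝ => σ⁻¹ * x) := rfl
    rw [h1, ← Measure.map_map (measurable_add_const _) (measurable_const_mul _)]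
    rw [show (fun x : ℝ => σ⁻¹ * x) = (σ⁻¹ * ·) from rfl, gaussianReal_map_const_mul σ⁻¹]
    rw [gaussianReal_map_add_const]
    congr 1
    · field_simp
      ring
    · rw [← NNReal.coe_inj, NNReal.coe_mul, NNReal.coe_one, NNReal.coe_mk, hveq]
      field_simp
  set S : Set ℝ := (fun y : ℝ => σ * y + a) ⁻¹' E with hSdef
  have hS : MeasurableSet S := hE.preimage ((measurable_id.const_mul σ).add_const a)
  have hcomp : ∀ x : ℝ, σ * (σ⁻¹ * x + (-(a/σ))) + a = x := by
    intro x; field_simp; ring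
  have hmeasφ : Measurable (fun x : ℝ => σ⁻¹ * x + (-(a/σ))) := (measurable_id.const_mul σ⁻¹).add_const _
  have hpre : (fun x : ℝ => σ⁻¹ * x + (-(a/σ))) ⁻¹' S = E := by
    ext x
    simp only [hSdef, Set.mem_preimage, hcomp x]
  have hE1 : gaussianReal 0 1 S = gaussianReal a v E := by
    have h := hmap a
    rw [show (a - a)/σ = 0 by simp] at h
    rw [← h, Measure.map_apply hmeasφ hS, hpre]
  have hE2 : gaussianReal ((b - a)/σ) 1 Sᶜ = gaussianReal b v Eᶜ := by
    rw [← hmap b, Measure.map_apply hmeasφ hS.compl, Set.preimage_compl, hpre]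
  have hcμ : |(b - a)/σ| ≤ μ := by
    rw [abs_div, abs_of_pos hσ, div_le_iff₀ hσ]
    have : |b - a| ≤ Δ := by rwa [abs_sub_comm]
    calc |b - a| ≤ Δ := this
      _ = μ * σ := by rw [hσdef]; field_simp
  have := np_wrap ((b - a)/σ) μ t α hμ hcμ hα ht S hS (by rw [hE1]; exact hPE)
  rwa [hE2] at this
end

section
/- Let μ > 0 and ε ≥ 0, and define δ_μ(ε) = Φ(−ε/μ + μ/2) − e^ε·Φ(−ε/μ − μ/2). Then for every measurable set O ⊆ ℝ, both N(μ,1)(O) ≤ e^ε·N(0,1)(O) + δ_μ(ε) and N(0,1)(O) ≤ e^ε·N(μ,1)(O) + δ_μ(ε); that is, the pair (N(0,1), N(μ,1)) satisfies (ε, δ_μ(ε))-indistinguishability for every ε ≥ 0. -/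
open MeasureTheory ProbabilityTheory Real Set

lemma gauss_toReal (m : ℝ) (s : Set ℝ) :
    ((gaussianReal m 1) s).toReal = ∫ x in s, gaussianPDFReal m 1 x := by
  rw [gaussianReal_apply_eq_integral m one_ne_zero s,
    ENNReal.toReal_ofReal (integral_nonneg fun x => gaussianPDFReal_nonneg _ _ _)]

lemma gauss_Iic (m x : ℝ) :
    ((gaussianReal m 1) (Iic x)).toReal = stdGaussCDF (x - m) := by
  have hmap : (gaussianReal 0 1).map (· + m) = gaussianReal m 1 := by
    simpa using gaussianReal_map_add_const (μ := 0) (v := 1) m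
  rw [← hmap, Measure.map_apply (measurable_add_const m) measurableSet_Iic]
  have hpre : (· + m) ⁻¹' Iic x = Iic (x - m) := by
    ext y; simp [le_sub_iff_add_le]
  rw [hpre, stdGaussCDF, cdf_eq_real, measureReal_def]

lemma gauss_singleton (m x : ℝ) : (gaussianReal m 1) {x} = 0 :=
  gaussianReal_absolutelyContinuous m one_ne_zero (Real.volume_singleton)

lemma gauss_neg_map : (gaussianReal 0 1).map (fun x : ℝ => -x) = gaussianReal 0 1 := by
  have h := gaussianReal_map_const_mul (μ := 0) (v := 1) (-1)
  have h2 : (NNReal.mk ((-1 : ℝ)^2) (sq_nonneg _)) * 1 = 1 := NNReal.eq (by rw [NNReal.coe_mul, NNReal.coe_mk]; norm_num)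
  simp only [h2, neg_one_mul, neg_zero, mul_zero] at h
  exact h

lemma stdGaussCDF_neg (x : ℝ) : stdGaussCDF (-x) = 1 - stdGaussCDF x := by
  have hIic : (gaussianReal 0 1) (Iic (-x)) = (gaussianReal 0 1) (Ici x) := by
    rw [← gauss_neg_map, Measure.map_apply measurable_neg measurableSet_Iic]
    have hpre : (fun y : ℝ => -y) ⁻¹' Iic (-x) = Ici x := by
      ext y
      simp only [Set.mem_preimage, Set.mem_Iic, Set.mem_Ici, neg_le_neg_iff]
    rw [hpre, gauss_neg_map]
  have hIci : (gaussianReal 0 1) (Ici x) = (gaussianReal 0 1) (Ioi x) :=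
    (measure_congr (Ioi_ae_eq_Ici' (gauss_singleton 0 x))).symm
  have hIoi : (gaussianReal 0 1) (Ioi x) = 1 - (gaussianReal 0 1) (Iic x) := by
    rw [← prob_compl_eq_one_sub measurableSet_Iic, compl_Iic]
  have hle : (gaussianReal 0 1) (Iic x) ≤ 1 := prob_le_one
  have h0 : stdGaussCDF (-x) = ((gaussianReal 0 1) (Iic (-x))).toReal := by
    rw [stdGaussCDF, cdf_eq_real, measureReal_def]
  have h1 : stdGaussCDF x = ((gaussianReal 0 1) (Iic x)).toReal := by
    rw [stdGaussCDF, cdf_eq_real, measureReal_def]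
  rw [h0, h1, hIic, hIci, hIoi, ENNReal.toReal_sub_of_le hle ENNReal.one_ne_top,
    ENNReal.toReal_one]

lemma gauss_Ioi (m x : ℝ) :
    ((gaussianReal m 1) (Ioi x)).toReal = stdGaussCDF (m - x) := by
  have hIoi : (gaussianReal m 1) (Ioi x) = 1 - (gaussianReal m 1) (Iic x) := by
    rw [← prob_compl_eq_one_sub measurableSet_Iic, compl_Iic]
  have hle : (gaussianReal m 1) (Iic x) ≤ 1 := prob_le_one
  rw [hIoi, ENNReal.toReal_sub_of_le hle ENNReal.one_ne_top, ENNReal.toReal_one, gauss_Iic]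
  rw [show m - x = -(x - m) by ring, stdGaussCDF_neg]

lemma engine {f : ℝ → ℝ} (hf : Integrable f) {S O : Set ℝ} (hS : MeasurableSet S)
    (hO : MeasurableSet O)
    (h1 : ∀ x ∈ S, 0 ≤ f x) (h2 : ∀ x ∉ S, f x ≤ 0) :
    ∫ x in O, f x ≤ ∫ x in S, f x := by
  have hsplit : (∫ x in O ∩ S, f x) + ∫ x in O \ S, f x = ∫ x in O, f x :=
    integral_inter_add_diff hS (hf.integrableOn (s := O))
  have hdiff : ∫ x in O \ S, f x ≤ 0 :=
    setIntegral_nonpos (hO.diff hS) (fun x hx => h2 x hx.2)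
  have hmono : ∫ x in O ∩ S, f x ≤ ∫ x in S, f x :=
    setIntegral_mono_set hf.integrableOn
      ((ae_restrict_iff' hS).2 (Filter.Eventually.of_forall h1))
      (Filter.Eventually.of_forall fun x hx => hx.2)
  linarith

lemma key (m1 m2 : ℝ) (c : ℝ) (S : Set ℝ) (hS : MeasurableSet S)
    (hin : ∀ x ∈ S, c * gaussianPDFReal m2 1 x ≤ gaussianPDFReal m1 1 x)
    (hout : ∀ x ∉ S, gaussianPDFReal m1 1 x ≤ c * gaussianPDFReal m2 1 x)
    (O : Set ℝ) (hO : MeasurableSet O) :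
    (gaussianReal m1 1 O).toReal ≤ c * (gaussianReal m2 1 O).toReal +
      ((gaussianReal m1 1 S).toReal - c * (gaussianReal m2 1 S).toReal) := by
  set f : ℝ → ℝ := fun x => gaussianPDFReal m1 1 x - c * gaussianPDFReal m2 1 x with hf_def
  have hf : Integrable f :=
    (integrable_gaussianPDFReal m1 1).sub ((integrable_gaussianPDFReal m2 1).const_mul c)
  have hint : ∀ A : Set ℝ, ∫ x in A, f x
      = (gaussianReal m1 1 A).toReal - c * (gaussianReal m2 1 A).toReal := by
    intro A
    rw [gauss_toReal, gauss_toReal, hf_def]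
    rw [integral_sub ((integrable_gaussianPDFReal m1 1).integrableOn)
      (((integrable_gaussianPDFReal m2 1).const_mul c).integrableOn), integral_const_mul]
  have h := engine hf hS hO (fun x hx => by have := hin x hx; simp [hf_def]; linarith)
    (fun x hx => by have := hout x hx; simp [hf_def]; linarith)
  rw [hint O, hint S] at h
  linarith

lemma pdf_le_iff (a b ε x : ℝ) :
    gaussianPDFReal a 1 x ≤ Real.exp ε * gaussianPDFReal b 1 x ↔
      -(x - a)^2 / 2 ≤ ε + -(x - b)^2 / 2 := by
  have h2π : (0:ℝ) < √(2 * π) := Real.sqrt_pos.2 (by positivity)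
  simp only [gaussianPDFReal, NNReal.coe_one, mul_one]
  rw [mul_left_comm, mul_le_mul_iff_right₀ (inv_pos.2 h2π), ← Real.exp_add, Real.exp_le_exp]

lemma pdf_le_iff' (a b ε x : ℝ) :
    Real.exp ε * gaussianPDFReal b 1 x ≤ gaussianPDFReal a 1 x ↔
      ε + -(x - b)^2 / 2 ≤ -(x - a)^2 / 2 := by
  have h2π : (0:ℝ) < √(2 * π) := Real.sqrt_pos.2 (by positivity)
  simp only [gaussianPDFReal, NNReal.coe_one, mul_one]
  rw [mul_left_comm, mul_le_mul_iff_right₀ (inv_pos.2 h2π), ← Real.exp_add, Real.exp_le_exp]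

theorem stmt_11 (μ ε : ℝ) (hμ : 0 < μ) (hε : 0 ≤ ε) :
    ∀ O : Set ℝ, MeasurableSet O →
      (gaussianReal μ 1 O).toReal ≤ Real.exp ε * (gaussianReal 0 1 O).toReal +
        (stdGaussCDF (-ε / μ + μ / 2) - Real.exp ε * stdGaussCDF (-ε / μ - μ / 2)) ∧
      (gaussianReal 0 1 O).toReal ≤ Real.exp ε * (gaussianReal μ 1 O).toReal +
        (stdGaussCDF (-ε / μ + μ / 2) - Real.exp ε * stdGaussCDF (-ε / μ - μ / 2)) := by
  intro O hO
  have hμε : ε / μ * μ = ε := div_mul_cancel₀ ε hμ.ne'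
  have hμε' : -ε / μ * μ = -ε := by rw [neg_div, neg_mul, hμε]
  constructor
  · -- direction 1 : m1 = μ, m2 = 0, S = Ioi (ε/μ + μ/2)
    have h := key μ 0 (Real.exp ε) (Ioi (ε / μ + μ / 2)) measurableSet_Ioi
      (fun x hx => by
        rw [pdf_le_iff']
        have hx' : ε / μ + μ / 2 ≤ x := le_of_lt hx
        have hmul := mul_le_mul_of_nonneg_right hx' hμ.le
        nlinarith [hmul, hμε, hμε'])
      (fun x hx => by
        rw [pdf_le_iff]
        have hx' : x ≤ ε / μ + μ / 2 := not_lt.mp hx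
        have hmul := mul_le_mul_of_nonneg_right hx' hμ.le
        nlinarith [hmul, hμε, hμε']) O hO
    rw [gauss_Ioi, gauss_Ioi,
      show μ - (ε / μ + μ / 2) = -ε / μ + μ / 2 by ring,
      show (0:ℝ) - (ε / μ + μ / 2) = -ε / μ - μ / 2 by ring] at h
    exact h
  · -- direction 2 : m1 = 0, m2 = μ, S = Iic (-ε/μ + μ/2)
    have h := key 0 μ (Real.exp ε) (Iic (-ε / μ + μ / 2)) measurableSet_Iic
      (fun x hx => by
        rw [pdf_le_iff']
        have hx' : x ≤ -ε / μ + μ / 2 := hx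
        have hmul := mul_le_mul_of_nonneg_right hx' hμ.le
        nlinarith [hmul, hμε, hμε'])
      (fun x hx => by
        rw [pdf_le_iff]
        have hx' : -ε / μ + μ / 2 ≤ x := le_of_lt (not_le.mp hx)
        have hmul := mul_le_mul_of_nonneg_right hx' hμ.le
        nlinarith [hmul, hμε, hμε']) O hO
    rw [gauss_Iic, gauss_Iic,
      show -ε / μ + μ / 2 - 0 = -ε / μ + μ / 2 by ring,
      show -ε / μ + μ / 2 - μ = -ε / μ - μ / 2 by ring] at h
    exact h
end

section
/- Let μ > 0, α ∈ (0,1), and t ∈ ℝ with Φ(t) = 1 − α. Then Φ(t − μ) = sup over ε ∈ [0,∞) of f_{ε, δ_μ(ε)}(α), where δ_μ(ε) = Φ(−ε/μ + μ/2) − e^ε·Φ(−ε/μ − μ/2); that is, the Gaussian trade-off function G_μ(α) = Φ(Φ^{−1}(1 − α) − μ) is the pointwise supremum of the trade-off functions f_{ε,δ_μ(ε)} over all ε ≥ 0. -/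
open MeasureTheory ProbabilityTheory Real

/-- The `δ(ε)` curve of `μ`-Gaussian differential privacy. -/
noncomputable def gdpDelta (μ ε : ℝ) : ℝ :=
  stdGaussCDF (-ε / μ + μ / 2) - Real.exp ε * stdGaussCDF (-ε / μ - μ / 2)

namespace StdGaussAux

open Set

lemma pdf_even (x : ℝ) : gaussianPDFReal 0 1 (-x) = gaussianPDFReal 0 1 x := by
  simp [gaussianPDFReal]

lemma pdf_cont : Continuous (gaussianPDFReal 0 1) := by
  unfold gaussianPDFReal
  fun_prop

lemma cdf_eq (x : ℝ) : stdGaussCDF x = ∫ t in Iic x, gaussianPDFReal 0 1 t := by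
  rw [stdGaussCDF, cdf_eq_real, measureReal_def, gaussianReal_apply_eq_integral 0 one_ne_zero,
    ENNReal.toReal_ofReal (integral_nonneg fun t => gaussianPDFReal_nonneg 0 1 t)]

lemma cdf_neg (x : ℝ) : stdGaussCDF (-x) = 1 - stdGaussCDF x := by
  have h1 : (∫ t in Iic (-x), gaussianPDFReal 0 1 t) = ∫ t in Ioi x, gaussianPDFReal 0 1 t := by
    have := integral_comp_neg_Iic (-x) (gaussianPDFReal 0 1)
    simp_rw [pdf_even, neg_neg] at this
    exact this
  have h2 := intervalIntegral.integral_Iic_add_Ioi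
    ((integrable_gaussianPDFReal 0 1).integrableOn (s := Iic x))
    ((integrable_gaussianPDFReal 0 1).integrableOn (s := Ioi x))
  rw [integral_gaussianPDFReal_eq_one 0 one_ne_zero] at h2
  rw [cdf_eq, cdf_eq, h1]
  linarith

lemma cdf_deriv (x : ℝ) : HasDerivAt stdGaussCDF (gaussianPDFReal 0 1 x) x := by
  have hfun : stdGaussCDF = fun y => (∫ t in (0:ℝ)..y, gaussianPDFReal 0 1 t) + stdGaussCDF 0 := by
    funext y
    rw [cdf_eq y, ← intervalIntegral.integral_Iic_sub_Iic
      ((integrable_gaussianPDFReal 0 1).integrableOn)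
      ((integrable_gaussianPDFReal 0 1).integrableOn), cdf_eq 0]
    ring
  rw [hfun]
  exact (intervalIntegral.integral_hasDerivAt_right
    ((integrable_gaussianPDFReal 0 1).intervalIntegrable)
    (pdf_cont.stronglyMeasurable.stronglyMeasurableAtFilter)
    pdf_cont.continuousAt).add_const _

lemma cdf_mono : Monotone stdGaussCDF := fun a b h => monotone_cdf _ h

lemma cdf_nonneg' (x : ℝ) : 0 ≤ stdGaussCDF x := cdf_nonneg _ x

lemma pdf_shift {μ ε : ℝ} (hμ : μ ≠ 0) :
    gaussianPDFReal 0 1 (ε/μ - μ/2) = Real.exp ε * gaussianPDFReal 0 1 (ε/μ + μ/2) := by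
  simp only [gaussianPDFReal, NNReal.coe_one, mul_one, sub_zero]
  rw [mul_comm (Real.exp ε), mul_assoc, ← Real.exp_add]
  congr 1
  rw [Real.exp_eq_exp]
  field_simp
  ring

end StdGaussAux

theorem stmt_12 (μ α t : ℝ) (hμ : 0 < μ) (hα : α ∈ Set.Ioo (0 : ℝ) 1)
    (ht : stdGaussCDF t = 1 - α) :
    stdGaussCDF (t - μ) = ⨆ ε : Set.Ici (0 : ℝ), fDP ε (gdpDelta μ ε) α := by
  have hμ' : μ ≠ 0 := hμ.ne'
  set A : ℝ → ℝ := fun ε => stdGaussCDF (ε/μ - μ/2)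
      + Real.exp ε * (stdGaussCDF (-ε/μ - μ/2) - α) with hA
  -- derivative of A
  have hA' : ∀ s : ℝ, HasDerivAt A (Real.exp s * (stdGaussCDF (-s/μ - μ/2) - α)) s := by
    intro s
    have hinner1 : HasDerivAt (fun e : ℝ => e/μ - μ/2) (1/μ) s := by
      simpa using ((hasDerivAt_id s).div_const μ).sub_const (μ/2)
    have hinner2 : HasDerivAt (fun e : ℝ => -e/μ - μ/2) (-1/μ) s := by
      have := (((hasDerivAt_id s).neg).div_const μ).sub_const (μ/2)
      simpa [neg_div] using this
    have h1 : HasDerivAt (fun e : ℝ => stdGaussCDF (e/μ - μ/2))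
        (gaussianPDFReal 0 1 (s/μ - μ/2) * (1/μ)) s :=
      (StdGaussAux.cdf_deriv (s/μ - μ/2)).comp s hinner1
    have h2 : HasDerivAt (fun e : ℝ => stdGaussCDF (-e/μ - μ/2) - α)
        (gaussianPDFReal 0 1 (-s/μ - μ/2) * (-1/μ)) s :=
      ((StdGaussAux.cdf_deriv (-s/μ - μ/2)).comp s hinner2).sub_const α
    have h3 := (Real.hasDerivAt_exp s).mul h2
    have h4 := h1.add h3
    have key : gaussianPDFReal 0 1 (s/μ - μ/2) * (1/μ)
        + (Real.exp s * (stdGaussCDF (-s/μ - μ/2) - α)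
          + Real.exp s * (gaussianPDFReal 0 1 (-s/μ - μ/2) * (-1/μ)))
        = Real.exp s * (stdGaussCDF (-s/μ - μ/2) - α) := by
      rw [StdGaussAux.pdf_shift hμ', show -s/μ - μ/2 = -(s/μ + μ/2) by ring,
        StdGaussAux.pdf_even]
      ring
    rw [← key]
    exact h4
  -- optimal epsilon
  set e₀ : ℝ := μ * t - μ^2/2 with he₀
  have harg1 : e₀/μ - μ/2 = t - μ := by field_simp; ring
  have harg2 : -e₀/μ - μ/2 = -t := by field_simp; ring
  have hneg_t : stdGaussCDF (-t) = α := by rw [StdGaussAux.cdf_neg, ht]; ring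
  have hAe₀ : A e₀ = stdGaussCDF (t - μ) := by
    rw [hA]
    simp only [harg1, harg2, hneg_t]
    ring
  -- A is bounded above by its value at e₀
  have hcont : Continuous A := continuous_iff_continuousAt.2 fun s => (hA' s).continuousAt
  have hargle : ∀ x : ℝ, x ≤ e₀ → α ≤ stdGaussCDF (-x/μ - μ/2) := by
    intro x hx
    have h1 : -e₀/μ - μ/2 ≤ -x/μ - μ/2 := by
      have : -e₀/μ ≤ -x/μ := (div_le_div_iff_of_pos_right hμ).2 (by linarith)
      linarith
    rw [harg2] at h1
    have := StdGaussAux.cdf_mono h1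
    rwa [hneg_t] at this
  have harggt : ∀ x : ℝ, e₀ ≤ x → stdGaussCDF (-x/μ - μ/2) ≤ α := by
    intro x hx
    have h1 : -x/μ - μ/2 ≤ -e₀/μ - μ/2 := by
      have : -x/μ ≤ -e₀/μ := (div_le_div_iff_of_pos_right hμ).2 (by linarith)
      linarith
    rw [harg2] at h1
    have := StdGaussAux.cdf_mono h1
    rwa [hneg_t] at this
  have hmono : MonotoneOn A (Set.Iic e₀) := by
    apply monotoneOn_of_deriv_nonneg (convex_Iic _) hcont.continuousOn
      (fun x _ => (hA' x).differentiableAt.differentiableWithinAt)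
    intro x hx
    rw [interior_Iic] at hx
    rw [(hA' x).deriv]
    have := hargle x hx.le
    nlinarith [Real.exp_pos x]
  have hanti : AntitoneOn A (Set.Ici e₀) := by
    apply antitoneOn_of_deriv_nonpos (convex_Ici _) hcont.continuousOn
      (fun x _ => (hA' x).differentiableAt.differentiableWithinAt)
    intro x hx
    rw [interior_Ici] at hx
    rw [(hA' x).deriv]
    have := harggt x hx.le
    nlinarith [Real.exp_pos x]
  have hAle : ∀ s : ℝ, A s ≤ stdGaussCDF (t - μ) := by
    intro s
    rw [← hAe₀]
    rcases le_total s e₀ with h | h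
    · exact hmono h Set.self_mem_Iic h
    · exact hanti Set.self_mem_Ici h h
  -- rewriting fDP in terms of A
  have hfd : ∀ ε : ℝ, fDP ε (gdpDelta μ ε) α = max 0 (max (A ε) (A (-ε))) := by
    intro ε
    have hsym : stdGaussCDF (-ε/μ + μ/2) = 1 - stdGaussCDF (ε/μ - μ/2) := by
      rw [show -ε/μ + μ/2 = -(ε/μ - μ/2) by ring, StdGaussAux.cdf_neg]
    have hexp : Real.exp (-ε) * Real.exp ε = 1 := by
      rw [← Real.exp_add]; simp
    rw [fDP, gdpDelta, hA]
    simp only [neg_neg]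
    congr 1
    congr 1
    · rw [hsym]; ring
    · rw [hsym]
      linear_combination stdGaussCDF (-ε/μ - μ/2) * hexp
  -- conclude
  haveI : Nonempty (Set.Ici (0:ℝ)) := ⟨⟨0, Set.self_mem_Ici⟩⟩
  have h0 : (0:ℝ) ≤ stdGaussCDF (t - μ) := StdGaussAux.cdf_nonneg' _
  have ub : ∀ ε : Set.Ici (0:ℝ), fDP ε (gdpDelta μ ε) α ≤ stdGaussCDF (t - μ) := by
    intro ε
    rw [hfd]
    exact max_le h0 (max_le (hAle _) (hAle _))
  have bdd : BddAbove (Set.range fun ε : Set.Ici (0:ℝ) => fDP ε (gdpDelta μ ε) α) := by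
    refine ⟨stdGaussCDF (t - μ), ?_⟩
    rintro x ⟨ε, rfl⟩
    exact ub ε
  refine le_antisymm ?_ (ciSup_le ub)
  rcases le_total 0 e₀ with h | h
  · refine le_ciSup_of_le bdd ⟨e₀, h⟩ ?_
    rw [hfd, ← hAe₀]
    exact le_max_of_le_right (le_max_left _ _)
  · refine le_ciSup_of_le bdd ⟨-e₀, by simpa using h⟩ ?_
    rw [hfd, neg_neg, ← hAe₀]
    exact le_max_of_le_right (le_max_right _ _)
end

section
/- Let T be a natural number and μ : Fin T → ℝ. Let P be the product measure on ℝ^T of T copies of N(0,1), and let Q be the product measure whose i-th factor is N(μ_i, 1). Let α ∈ (0,1) and t ∈ ℝ with Φ(t) = 1 − α. Then for every measurable set E ⊆ ℝ^T with P(E) ≤ α, one has Q(complement of E) ≥ Φ(t − √(Σ_i μ_i²)); that is, the T-fold composition of μ_i-GDP Gaussian mechanisms is √(μ_1² + ⋯ + μ_T²)-GDP. -/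
open MeasureTheory ProbabilityTheory Real
open scoped NNReal ENNReal

lemma pdf_conv {v w : ℝ≥0} (hv : v ≠ 0) (hw : w ≠ 0) (z : ℝ) :
    ∫ x, gaussianPDFReal 0 v x * gaussianPDFReal 0 w (z - x) = gaussianPDFReal 0 (v + w) z := by
  set a := (v : ℝ) with ha'
  set b := (w : ℝ) with hb'
  have ha : 0 < a := NNReal.coe_pos.mpr (zero_lt_iff.mpr hv)
  have hb : 0 < b := NNReal.coe_pos.mpr (zero_lt_iff.mpr hw)
  have hab : 0 < a + b := by linarith
  set k : ℝ := (a + b) / (2 * a * b) with hk'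
  have hk : 0 < k := by positivity
  set c : ℝ := a * z / (a + b) with hc'
  set D : ℝ := (Real.sqrt (2 * π * a))⁻¹ * (Real.sqrt (2 * π * b))⁻¹
      * Real.exp (-z ^ 2 / (2 * (a + b))) with hD'
  have key : ∀ x : ℝ, gaussianPDFReal 0 v x * gaussianPDFReal 0 w (z - x)
      = D * Real.exp (-(k * (x - c) ^ 2)) := by
    intro x
    have hexp : (-(x - 0) ^ 2 / (2 * a)) + (-((z - x) - 0) ^ 2 / (2 * b))
        = (-z ^ 2 / (2 * (a + b))) + (-(k * (x - c) ^ 2)) := by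
      rw [hk', hc']; field_simp; ring
    simp only [gaussianPDFReal, ← ha', ← hb']
    rw [mul_mul_mul_comm, ← Real.exp_add, hexp, Real.exp_add, hD']
    ring
  have hInt : ∫ x : ℝ, Real.exp (-(k * (x - c) ^ 2)) = Real.sqrt (π / k) := by
    have := integral_sub_right_eq_self (μ := volume) (fun x : ℝ => Real.exp (-(k * x ^ 2))) c
    rw [this]
    simpa using integral_gaussian k
  calc ∫ x, gaussianPDFReal 0 v x * gaussianPDFReal 0 w (z - x)
      = ∫ x : ℝ, D * Real.exp (-(k * (x - c) ^ 2)) := by simp only [key]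
    _ = D * Real.sqrt (π / k) := by rw [MeasureTheory.integral_const_mul, hInt]
    _ = gaussianPDFReal 0 (v + w) z := by
        have hs : Real.sqrt (π / k) = Real.sqrt (2 * π * a) * Real.sqrt (2 * π * b)
            / Real.sqrt (2 * π * (a + b)) := by
          rw [← Real.sqrt_mul (by positivity), ← Real.sqrt_div (by positivity)]
          congr 1
          rw [hk']; field_simp
        rw [hs, hD']
        simp only [gaussianPDFReal, NNReal.coe_add, ← ha', ← hb', sub_zero]
        have h1 : Real.sqrt (2 * π * a) ≠ 0 := by positivity
        have h2 : Real.sqrt (2 * π * b) ≠ 0 := by positivity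
        have h3 : Real.sqrt (2 * π * (a + b)) ≠ 0 := by positivity
        field_simp

lemma pdf_conv_integrable (v w : ℝ≥0) (z : ℝ) :
    Integrable (fun x => gaussianPDFReal 0 v x * gaussianPDFReal 0 w (z - x)) := by
  have hb : ∀ x : ℝ, ‖gaussianPDFReal 0 w (z - x)‖ ≤ (Real.sqrt (2 * π * w))⁻¹ := by
    intro x
    rw [Real.norm_eq_abs, abs_of_nonneg (gaussianPDFReal_nonneg _ _ _)]
    unfold gaussianPDFReal
    calc (Real.sqrt (2 * π * w))⁻¹ * Real.exp (-(z - x - 0) ^ 2 / (2 * w))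
        ≤ (Real.sqrt (2 * π * w))⁻¹ * 1 := by
          have harg : -(z - x - 0) ^ 2 / (2 * (w : ℝ)) ≤ 0 :=
            div_nonpos_of_nonpos_of_nonneg (neg_nonpos.mpr (sq_nonneg _)) (by positivity)
          gcongr
          exact Real.exp_le_one_iff.mpr harg
      _ = (Real.sqrt (2 * π * w))⁻¹ := mul_one _
  have h := (integrable_gaussianPDFReal 0 v).bdd_mul
    (((measurable_gaussianPDFReal 0 w).comp
      (measurable_const.sub measurable_id)).aestronglyMeasurable)
    (ae_of_all _ hb)
  convert h using 2 with x
  simp [Function.comp, mul_comm]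
lemma pdf_conv_lintegral {v w : ℝ≥0} (hv : v ≠ 0) (hw : w ≠ 0) (z : ℝ) :
    ∫⁻ x, gaussianPDF 0 v x * gaussianPDF 0 w (z - x) = gaussianPDF 0 (v + w) z := by
  simp only [gaussianPDF]
  calc ∫⁻ x, ENNReal.ofReal (gaussianPDFReal 0 v x)
        * ENNReal.ofReal (gaussianPDFReal 0 w (z - x))
      = ∫⁻ x, ENNReal.ofReal (gaussianPDFReal 0 v x * gaussianPDFReal 0 w (z - x)) :=
        lintegral_congr fun x => (ENNReal.ofReal_mul (gaussianPDFReal_nonneg _ _ _)).symm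
    _ = ENNReal.ofReal (∫ x, gaussianPDFReal 0 v x * gaussianPDFReal 0 w (z - x)) :=
        (ofReal_integral_eq_lintegral_ofReal (pdf_conv_integrable v w z)
          (ae_of_all _ fun x => mul_nonneg (gaussianPDFReal_nonneg _ _ _)
            (gaussianPDFReal_nonneg _ _ _))).symm
    _ = ENNReal.ofReal (gaussianPDFReal 0 (v + w) z) := by rw [pdf_conv hv hw z]

lemma gauss_conv (v w : ℝ≥0) :
    ((gaussianReal 0 v).prod (gaussianReal 0 w)).map (fun p : ℝ × ℝ => p.1 + p.2)
      = gaussianReal 0 (v + w) := by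
  by_cases hv : v = 0
  · subst hv
    rw [gaussianReal_zero_var, Measure.dirac_prod, zero_add,
      Measure.map_map measurable_add measurable_prodMk_left]
    have : ((fun p : ℝ × ℝ => p.1 + p.2) ∘ (Prod.mk (0 : ℝ))) = id := by funext y; simp
    rw [this, Measure.map_id]
  by_cases hw : w = 0
  · subst hw
    rw [gaussianReal_zero_var, Measure.prod_dirac, add_zero,
      Measure.map_map measurable_add measurable_prodMk_right]
    have : ((fun p : ℝ × ℝ => p.1 + p.2) ∘ (fun x : ℝ => (x, (0 : ℝ)))) = id := by
      funext y; simp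
    rw [this, Measure.map_id]
  have hvw : v + w ≠ 0 := by simp [hv]
  ext s hs
  rw [Measure.map_apply measurable_add hs, Measure.prod_apply (hs.preimage measurable_add)]
  have h1 : ∀ x : ℝ, gaussianReal 0 w (Prod.mk x ⁻¹' ((fun p : ℝ × ℝ => p.1 + p.2) ⁻¹' s))
      = ∫⁻ z in s, gaussianPDF 0 w (z - x) := by
    intro x
    have hpre : (Prod.mk x ⁻¹' ((fun p : ℝ × ℝ => p.1 + p.2) ⁻¹' s))
        = (fun y : ℝ => x + y) ⁻¹' s := rfl
    rw [hpre, gaussianReal_apply _ hw]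
    have hmp : MeasurePreserving (fun y : ℝ => x + y) volume volume :=
      measurePreserving_add_left volume x
    have hemb : MeasurableEmbedding (fun y : ℝ => x + y) :=
      (MeasurableEquiv.addLeft x).measurableEmbedding
    rw [← hmp.setLIntegral_comp_preimage_emb hemb (fun z => gaussianPDF 0 w (z - x)) s]
    congr 1 with y
    simp
  have hmw : Measurable fun p : ℝ × ℝ => gaussianPDF 0 w (p.2 - p.1) :=
    (measurable_gaussianPDF 0 w).comp (measurable_snd.sub measurable_fst)
  have hmeas : Measurable fun x : ℝ => ∫⁻ z in s, gaussianPDF 0 w (z - x) :=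
    Measurable.lintegral_prod_right (f := fun x z => gaussianPDF 0 w (z - x)) hmw
  rw [lintegral_congr h1, gaussianReal_of_var_ne_zero 0 hv,
    lintegral_withDensity_eq_lintegral_mul _ (measurable_gaussianPDF 0 v) hmeas]
  simp only [Pi.mul_apply]
  have h2 : ∀ x : ℝ, gaussianPDF 0 v x * ∫⁻ z in s, gaussianPDF 0 w (z - x)
      = ∫⁻ z in s, gaussianPDF 0 v x * gaussianPDF 0 w (z - x) := by
    intro x
    have hmm : Measurable fun z : ℝ => gaussianPDF 0 w (z - x) :=
      (measurable_gaussianPDF 0 w).comp (measurable_id.sub measurable_const)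
    exact (lintegral_const_mul _ hmm).symm
  rw [lintegral_congr h2, lintegral_lintegral_swap
    (((measurable_gaussianPDF 0 v).comp measurable_fst).mul
      ((measurable_gaussianPDF 0 w).comp (measurable_snd.sub measurable_fst))).aemeasurable]
  rw [gaussianReal_apply _ hvw]
  exact setLIntegral_congr_fun hs (fun z _ => pdf_conv_lintegral hv hw z)

lemma lintegral_pi_prod : ∀ {n : ℕ} (ν : Fin n → Measure ℝ), (∀ i, IsProbabilityMeasure (ν i)) →
    ∀ (f : Fin n → ℝ → ℝ≥0∞), (∀ i, Measurable (f i)) →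
    ∫⁻ x, ∏ i, f i (x i) ∂Measure.pi ν = ∏ i, ∫⁻ t, f i t ∂ν i := by
  intro n
  induction n with
  | zero =>
    intro ν hν f hf
    rw [Measure.pi_of_empty]
    simp
  | succ n ih =>
    intro ν hν f hf
    have mp := measurePreserving_piFinSuccAbove ν 0
    set e := MeasurableEquiv.piFinSuccAbove (fun _ : Fin (n + 1) => ℝ) 0 with he
    have hG : Measurable fun p : ℝ × (Fin n → ℝ) => f 0 p.1 * ∏ j, f j.succ (p.2 j) := by
      refine ((hf 0).comp measurable_fst).mul ?_
      refine Finset.measurable_prod _ fun j _ => ?_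
      exact (hf j.succ).comp ((measurable_pi_apply j).comp measurable_snd)
    have step1 : ∫⁻ x, ∏ i, f i (x i) ∂Measure.pi ν
        = ∫⁻ p, f 0 p.1 * ∏ j, f j.succ (p.2 j)
            ∂((ν 0).prod (Measure.pi fun j => ν ((0 : Fin (n+1)).succAbove j))) := by
      rw [← mp.lintegral_comp hG]
      refine lintegral_congr fun x => ?_
      rw [Fin.prod_univ_succ]
      rfl
    rw [step1, lintegral_prod _ hG.aemeasurable]
    have inner : ∀ a : ℝ, ∫⁻ y : Fin n → ℝ, f 0 a * ∏ j : Fin n, f j.succ (y j)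
          ∂(Measure.pi fun j => ν ((0 : Fin (n+1)).succAbove j))
        = f 0 a * ∏ j : Fin n, ∫⁻ t, f j.succ t ∂(ν j.succ) := by
      intro a
      rw [lintegral_const_mul _ (Finset.measurable_prod _ fun j _ =>
        (hf j.succ).comp (measurable_pi_apply j))]
      congr 1
      have : (fun j : Fin n => ν ((0 : Fin (n+1)).succAbove j)) = fun j => ν j.succ := by
        funext j; rw [Fin.succAbove_zero]
      rw [this]
      exact ih (fun j => ν j.succ) (fun j => hν j.succ) (fun j => f j.succ)
        (fun j => hf j.succ)
    rw [lintegral_congr inner, lintegral_mul_const _ (hf 0), Fin.prod_univ_succ]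

lemma pi_gauss_map_sum : ∀ (n : ℕ) (m : Fin n → ℝ),
    (Measure.pi fun _ : Fin n => gaussianReal 0 1).map (fun x => ∑ i, m i * x i)
      = gaussianReal 0 (∑ i, (m i) ^ 2).toNNReal := by
  intro n
  induction n with
  | zero =>
    intro m
    have : (fun x : Fin 0 → ℝ => ∑ i, m i * x i) = fun _ => (0 : ℝ) := by
      funext x; simp
    rw [this, Measure.map_const]
    simp
  | succ n ih =>
    intro m
    have mp := measurePreserving_piFinSuccAbove (fun _ : Fin (n + 1) => gaussianReal 0 1) 0
    set e := MeasurableEquiv.piFinSuccAbove (fun _ : Fin (n + 1) => ℝ) 0 with he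
    set S' : (Fin n → ℝ) → ℝ := fun y => ∑ j, m j.succ * y j with hS'
    have hS'm : Measurable S' :=
      Finset.measurable_sum _ fun j _ => (measurable_pi_apply j).const_mul _
    have hg : Measurable fun p : ℝ × (Fin n → ℝ) => m 0 * p.1 + S' p.2 :=
      (measurable_fst.const_mul _).add (hS'm.comp measurable_snd)
    have hsplit : (fun x : Fin (n+1) → ℝ => ∑ i, m i * x i)
        = (fun p : ℝ × (Fin n → ℝ) => m 0 * p.1 + S' p.2) ∘ e := by
      funext x
      simp only [Function.comp_apply, hS']
      rw [Fin.sum_univ_succ]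
      rfl
    rw [hsplit, ← Measure.map_map hg e.measurable, mp.map_eq]
    have hpi : (Measure.pi fun j : Fin n =>
          (fun _ : Fin (n+1) => gaussianReal 0 1) ((0 : Fin (n+1)).succAbove j))
        = Measure.pi fun _ : Fin n => gaussianReal 0 1 := rfl
    rw [hpi]
    have hcomp : (fun p : ℝ × (Fin n → ℝ) => m 0 * p.1 + S' p.2)
        = (fun q : ℝ × ℝ => q.1 + q.2) ∘ Prod.map (fun a => m 0 * a) S' := by
      funext p; rfl
    have hPM : Measurable (Prod.map (fun a : ℝ => m 0 * a) S') :=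
      (measurable_fst.const_mul _).prodMk (hS'm.comp measurable_snd)
    rw [hcomp, ← Measure.map_map measurable_add hPM,
      ← Measure.map_prod_map _ _ (measurable_const_mul _) hS'm]
    have h1 : (gaussianReal 0 1).map (m 0 * ·) = gaussianReal 0 (NNReal.mk ((m 0)^2) (sq_nonneg _)) := by
      rw [gaussianReal_map_const_mul]
      norm_num
    have h2 := ih (fun j => m j.succ)
    rw [h1, h2, gauss_conv]
    congr 1
    rw [Fin.sum_univ_succ]
    rw [Real.toNNReal_add (sq_nonneg _) (by positivity)]
    congr 1
    · ext : 1
      simp [Real.toNNReal, max_eq_left (sq_nonneg (m 0))]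

lemma gauss_tilt (m : ℝ) {v : ℝ≥0} (hv : v ≠ 0) :
    gaussianReal m v = (gaussianReal 0 v).withDensity
      (fun x => ENNReal.ofReal (Real.exp (m * x / v - m ^ 2 / (2 * v)))) := by
  have hv' : (v : ℝ) ≠ 0 := by exact_mod_cast hv
  have hmeas : Measurable fun x : ℝ => ENNReal.ofReal
      (Real.exp (m * x / v - m ^ 2 / (2 * v))) :=
    ENNReal.measurable_ofReal.comp
      (((measurable_id.const_mul m).div_const _).sub measurable_const).exp
  rw [gaussianReal_of_var_ne_zero m hv, gaussianReal_of_var_ne_zero 0 hv,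
    ← withDensity_mul _ (measurable_gaussianPDF 0 v) hmeas]
  congr 1
  funext x
  simp only [Pi.mul_apply, gaussianPDF]
  rw [← ENNReal.ofReal_mul (gaussianPDFReal_nonneg _ _ _)]
  congr 1
  unfold gaussianPDFReal
  conv_rhs => rw [mul_assoc, ← Real.exp_add]
  congr 1
  field_simp
  ring

lemma pi_gauss_withDensity {n : ℕ} (m : Fin n → ℝ) :
    Measure.pi (fun i : Fin n => gaussianReal (m i) 1)
      = (Measure.pi fun _ : Fin n => gaussianReal 0 1).withDensity
          (fun x => ENNReal.ofReal (Real.exp ((∑ i, m i * x i) - (∑ i, (m i) ^ 2) / 2))) := by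
  set ℓ : Fin n → ℝ → ℝ≥0∞ :=
    fun i t => ENNReal.ofReal (Real.exp (m i * t - (m i) ^ 2 / 2)) with hℓ
  have hℓm : ∀ i, Measurable (ℓ i) := by
    intro i
    exact ENNReal.measurable_ofReal.comp
      ((measurable_id.const_mul _).sub measurable_const).exp
  have hF : (fun x : Fin n → ℝ => ENNReal.ofReal
      (Real.exp ((∑ i, m i * x i) - (∑ i, (m i) ^ 2) / 2))) = fun x => ∏ i, ℓ i (x i) := by
    funext x
    rw [hℓ]
    rw [← ENNReal.ofReal_prod_of_nonneg (fun i _ => (Real.exp_pos _).le), ← Real.exp_sum]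
    congr 2
    rw [Finset.sum_sub_distrib, Finset.sum_div]
  rw [hF]
  refine Measure.pi_eq fun s hs => ?_
  rw [withDensity_apply _ (MeasurableSet.univ_pi hs)]
  have hind : ∀ x : Fin n → ℝ, (Set.univ.pi s).indicator (fun x => ∏ i, ℓ i (x i)) x
      = ∏ i, (s i).indicator (ℓ i) (x i) := by
    intro x
    by_cases hx : x ∈ Set.univ.pi s
    · rw [Set.indicator_of_mem hx]
      exact Finset.prod_congr rfl fun i _ =>
        (Set.indicator_of_mem (hx i (Set.mem_univ i)) _).symm
    · rw [Set.indicator_of_notMem hx]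
      symm
      rw [Set.mem_univ_pi] at hx
      push_neg at hx
      obtain ⟨i, hi⟩ := hx
      exact Finset.prod_eq_zero (Finset.mem_univ i) (Set.indicator_of_notMem hi _)
  rw [← lintegral_indicator (MeasurableSet.univ_pi hs) _, lintegral_congr hind,
    lintegral_pi_prod _ (fun i => inferInstance) _ (fun i => (hℓm i).indicator (hs i))]
  refine Finset.prod_congr rfl fun i _ => ?_
  rw [lintegral_indicator (hs i) _, ← withDensity_apply _ (hs i)]
  rw [gauss_tilt (m i) (one_ne_zero : (1 : ℝ≥0) ≠ 0)]
  have hfun : (fun x : ℝ => ENNReal.ofReal (Real.exp (m i * x / ((1 : ℝ≥0) : ℝ)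
      - m i ^ 2 / (2 * ((1 : ℝ≥0) : ℝ))))) = ℓ i := by
    funext x; rw [hℓ]; norm_num
  rw [hfun]

lemma withDensity_comp_map {α β : Type*} [MeasurableSpace α] [MeasurableSpace β]
    (μ : Measure α) {S : α → β} (hS : Measurable S) {g : β → ℝ≥0∞} (hg : Measurable g) :
    (μ.withDensity (fun x => g (S x))).map S = (μ.map S).withDensity g := by
  ext u hu
  rw [Measure.map_apply hS hu, withDensity_apply _ (hS hu), withDensity_apply _ hu,
    setLIntegral_map hu hg hS]

theorem stmt_14 (T : ℕ) (μ : Fin T → ℝ) (α t : ℝ)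
    (hα : α ∈ Set.Ioo (0 : ℝ) 1) (ht : stdGaussCDF t = 1 - α) :
    ∀ E : Set (Fin T → ℝ), MeasurableSet E →
      (Measure.pi (fun _ : Fin T => gaussianReal 0 1) E).toReal ≤ α →
      (Measure.pi (fun i : Fin T => gaussianReal (μ i) 1) Eᶜ).toReal ≥
        stdGaussCDF (t - Real.sqrt (∑ i, (μ i) ^ 2)) := by
  intro E hE hPE
  set P : Measure (Fin T → ℝ) := Measure.pi (fun _ : Fin T => gaussianReal 0 1) with hPdef
  set Q : Measure (Fin T → ℝ) := Measure.pi (fun i : Fin T => gaussianReal (μ i) 1) with hQdef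
  have hPprob : IsProbabilityMeasure P := by rw [hPdef]; infer_instance
  have hQprob : IsProbabilityMeasure Q := by rw [hQdef]; infer_instance
  set s : ℝ := ∑ i, (μ i) ^ 2 with hsdef
  have hs0 : (0 : ℝ) ≤ s := by positivity
  have hstd : ∀ x, stdGaussCDF x = ((gaussianReal 0 1) (Set.Iic x)).toReal := fun x =>
    cdf_eq_real (gaussianReal 0 1) x
  have hPcompl : (P Eᶜ).toReal = 1 - (P E).toReal := by
    rw [measure_compl hE (measure_ne_top _ _), measure_univ,
      ENNReal.toReal_sub_of_le prob_le_one ENNReal.one_ne_top]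
    simp
  by_cases hs : s = 0
  · -- degenerate case: all means zero
    have hμ0 : ∀ i, μ i = 0 := by
      intro i
      have h2 := (Finset.sum_eq_zero_iff_of_nonneg
        (fun j _ => sq_nonneg (μ j))).mp hs i (Finset.mem_univ i)
      exact pow_eq_zero_iff (two_ne_zero) |>.mp h2
    have hQP : Q = P := by
      rw [hQdef, hPdef]
      congr 1
      funext i
      rw [hμ0 i]
    rw [hs, Real.sqrt_zero, sub_zero, ht, hQP, hPcompl]
    linarith
  · have hspos : (0 : ℝ) < s := lt_of_le_of_ne hs0 (Ne.symm hs)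
    set σ : ℝ := Real.sqrt s with hσdef
    have hσpos : 0 < σ := Real.sqrt_pos.mpr hspos
    have hσ2 : σ ^ 2 = s := Real.sq_sqrt hs0
    set v : ℝ≥0 := s.toNNReal with hvdef
    have hv : v ≠ 0 := (Real.toNNReal_pos.mpr hspos).ne'
    have hvcoe : (v : ℝ) = s := Real.coe_toNNReal s hs0
    set S : (Fin T → ℝ) → ℝ := fun x => ∑ i, μ i * x i with hSdef
    have hSm : Measurable S :=
      Finset.measurable_sum _ fun i _ => (measurable_pi_apply i).const_mul _
    have hmapP : P.map S = gaussianReal 0 v := pi_gauss_map_sum T μ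
    set L : (Fin T → ℝ) → ℝ≥0∞ := fun x => ENNReal.ofReal (Real.exp (S x - s / 2)) with hLdef
    have hQ : Q = P.withDensity L := pi_gauss_withDensity μ
    set g : ℝ → ℝ≥0∞ := fun u => ENNReal.ofReal (Real.exp (u - s / 2)) with hgdef
    have hgm : Measurable g :=
      ENNReal.measurable_ofReal.comp (measurable_id.sub measurable_const).exp
    have hLm : Measurable L := hgm.comp hSm
    have hmapQ : Q.map S = gaussianReal s v := by
      rw [hQ, show P.withDensity L = P.withDensity (fun x => g (S x)) from rfl,
        withDensity_comp_map P hSm hgm, hmapP, gauss_tilt s hv]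
      have harg : ∀ u : ℝ, s * u / (v : ℝ) - s ^ 2 / (2 * (v : ℝ)) = u - s / 2 := by
        intro u
        rw [hvcoe]
        field_simp
      have hgfun : (fun x : ℝ => ENNReal.ofReal
          (Real.exp (s * x / (v : ℝ) - s ^ 2 / (2 * (v : ℝ))))) = g := by
        funext u
        rw [harg u]
      rw [hgfun]
    set c : ℝ := t * σ with hcdef
    set A : Set (Fin T → ℝ) := S ⁻¹' Set.Iic c with hAdef
    have hA : MeasurableSet A := hSm measurableSet_Iic
    have hscale : ∀ u : ℝ, (gaussianReal 0 v) (Set.Iic u)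
        = (gaussianReal 0 1) (Set.Iic (u / σ)) := by
      intro u
      have h1 : (gaussianReal 0 1).map (σ * ·) = gaussianReal 0 v := by
        rw [gaussianReal_map_const_mul σ, mul_zero]
        congr 1
        apply NNReal.coe_injective
        push_cast
        rw [hσ2, hvcoe]
        ring
      rw [← h1, Measure.map_apply (measurable_const_mul σ) measurableSet_Iic]
      congr 1
      ext x
      simp only [Set.mem_preimage, Set.mem_Iic]
      rw [mul_comm, ← le_div_iff₀ hσpos]
    have hPA : (P A).toReal = 1 - α := by
      have h1 : P A = (P.map S) (Set.Iic c) := by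
        rw [Measure.map_apply hSm measurableSet_Iic]
      have h2 : c / σ = t := mul_div_cancel_right₀ t hσpos.ne'
      rw [h1, hmapP, hscale c, h2, ← hstd t, ht]
    have hQA : (Q A).toReal = stdGaussCDF (t - σ) := by
      have h1 : Q A = (Q.map S) (Set.Iic c) := by
        rw [Measure.map_apply hSm measurableSet_Iic]
      have hshift : (gaussianReal 0 v).map (· + s) = gaussianReal s v := by
        rw [gaussianReal_map_add_const s, zero_add]
      have hpre : ((· + s) ⁻¹' Set.Iic c) = Set.Iic (c - s) := by
        ext x
        simp only [Set.mem_preimage, Set.mem_Iic]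
        exact le_sub_iff_add_le.symm
      have h3 : (c - s) / σ = t - σ := by
        have : c - s = (t - σ) * σ := by
          rw [hcdef]
          nlinarith [hσ2]
        rw [this, mul_div_cancel_right₀ _ hσpos.ne']
      rw [h1, hmapQ, ← hshift, Measure.map_apply (measurable_add_const s) measurableSet_Iic,
        hpre, hscale (c - s), h3, ← hstd]
    set κ : ℝ := Real.exp (c - s / 2) with hκdef
    have hκpos : 0 < κ := Real.exp_pos _
    have hQap : ∀ B : Set (Fin T → ℝ), MeasurableSet B → Q B = ∫⁻ x in B, L x ∂P := by
      intro B hB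
      rw [hQ, withDensity_apply _ hB]
    have hub : ∀ B : Set (Fin T → ℝ), MeasurableSet B → B ⊆ A →
        (Q B).toReal ≤ κ * (P B).toReal := by
      intro B hB hBA
      have h1 : Q B ≤ ENNReal.ofReal κ * P B := by
        rw [hQap B hB]
        calc ∫⁻ x in B, L x ∂P ≤ ∫⁻ _x in B, ENNReal.ofReal κ ∂P := by
              refine setLIntegral_mono measurable_const fun x hx => ?_
              have hxc : S x ≤ c := hBA hx
              exact ENNReal.ofReal_le_ofReal (Real.exp_le_exp.mpr (by linarith))
          _ = ENNReal.ofReal κ * P B := by rw [setLIntegral_const]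
      calc (Q B).toReal ≤ (ENNReal.ofReal κ * P B).toReal :=
            ENNReal.toReal_mono (ENNReal.mul_ne_top ENNReal.ofReal_ne_top
              (measure_ne_top _ _)) h1
        _ = κ * (P B).toReal := by
            rw [ENNReal.toReal_mul, ENNReal.toReal_ofReal hκpos.le]
    have hlb : ∀ B : Set (Fin T → ℝ), MeasurableSet B → B ⊆ Aᶜ →
        κ * (P B).toReal ≤ (Q B).toReal := by
      intro B hB hBA
      have h1 : ENNReal.ofReal κ * P B ≤ Q B := by
        rw [hQap B hB, ← setLIntegral_const]
        refine setLIntegral_mono hLm fun x hx => ?_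
        have hxc : ¬ S x ≤ c := hBA hx
        exact ENNReal.ofReal_le_ofReal (Real.exp_le_exp.mpr (by linarith [not_le.mp hxc]))
      calc κ * (P B).toReal = (ENNReal.ofReal κ * P B).toReal := by
            rw [ENNReal.toReal_mul, ENNReal.toReal_ofReal hκpos.le]
        _ ≤ (Q B).toReal := ENNReal.toReal_mono (measure_ne_top _ _) h1
    -- decompositions
    have decomp : ∀ (ν : Measure (Fin T → ℝ)), IsProbabilityMeasure ν →
        ((ν (A ∩ Eᶜ)).toReal + (ν (Eᶜ ∩ Aᶜ)).toReal = (ν Eᶜ).toReal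
          ∧ (ν (A ∩ E)).toReal + (ν (A ∩ Eᶜ)).toReal = (ν A).toReal) := by
      intro ν hν
      constructor
      · have h := measure_inter_add_diff (μ := ν) Eᶜ hA
        rw [Set.diff_eq] at h
        rw [Set.inter_comm A Eᶜ, ← ENNReal.toReal_add (measure_ne_top _ _)
          (measure_ne_top _ _), h]
      · have h := measure_inter_add_diff (μ := ν) A hE
        rw [Set.diff_eq] at h
        rw [← ENNReal.toReal_add (measure_ne_top _ _) (measure_ne_top _ _), h]
    obtain ⟨eqQ1, eqQ2⟩ := decomp Q hQprob
    obtain ⟨eqP1, eqP2⟩ := decomp P hPprob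
    have ineq1 : κ * (P (Eᶜ ∩ Aᶜ)).toReal ≤ (Q (Eᶜ ∩ Aᶜ)).toReal :=
      hlb _ (hE.compl.inter hA.compl) Set.inter_subset_right
    have ineq2 : (Q (A ∩ E)).toReal ≤ κ * (P (A ∩ E)).toReal :=
      hub _ (hA.inter hE) Set.inter_subset_left
    have h7 : (P (Eᶜ ∩ Aᶜ)).toReal - (P (A ∩ E)).toReal = α - (P E).toReal := by
      have := hPcompl
      linarith [eqP1, eqP2, hPA]
    have h9 : κ * (P (Eᶜ ∩ Aᶜ)).toReal - κ * (P (A ∩ E)).toReal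
        = κ * (α - (P E).toReal) := by
      rw [← h7]; ring
    have h10 : 0 ≤ κ * (α - (P E).toReal) := mul_nonneg hκpos.le (by linarith)
    rw [ge_iff_le, ← hQA]
    linarith [eqQ1, eqQ2, ineq1, ineq2]
end
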